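/- Consider the SIR⁽²⁾S model with vaccination, assume R₀ > 1, and fix η₁ ≥ 0 with c₁+c₂+μ+η₁ − c₁·R₀/2 > 0. Then η_s = D·(R₀−1)/(c₁+c₂+μ+η₁ − c₁·R₀/2), where D = (c₁+μ)·(c₂+μ) + μ·η₁, is the unique nonnegative vaccination rate of susceptibles satisfying R_e(η_s, η₁) = 1. -/
import Mathlib


/-- D = (c₁+μ)(c₂+μ) + μ·η₁. -/
def sir2sD (μ c₁ c₂ η₁ : ℝ) : ℝ := (c₁ + μ) * (c₂ + μ) + μ * η₁

/-- E = D + ηs·(c₁+c₂+μ+η₁). -/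
def sir2sE (μ c₁ c₂ ηs η₁ : ℝ) : ℝ := sir2sD μ c₁ c₂ η₁ + ηs * (c₁ + c₂ + μ + η₁)

/-- Effective reproduction number R_e(ηs, η₁) = R₀·(D + ηs·c₁/2)/E with R₀ = β/(γ+μ). -/
noncomputable def sir2sRe (β γ μ c₁ c₂ ηs η₁ : ℝ) : ℝ :=
  β / (γ + μ) * (sir2sD μ c₁ c₂ η₁ + ηs * c₁ / 2) / sir2sE μ c₁ c₂ ηs η₁

/-- If R₀ > 1 and η₁ ≥ 0 with c₁+c₂+μ+η₁ − c₁R₀/2 > 0, then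
ηs = D·(R₀−1)/(c₁+c₂+μ+η₁ − c₁R₀/2) is the unique nonnegative vaccination rate of
susceptibles with R_e(ηs, η₁) = 1. -/
theorem sir2s_unique_susceptible_vaccination_rate
    (β γ μ c₁ c₂ η₁ : ℝ) (hβ : 0 < β) (hγ : 0 < γ) (hμ : 0 < μ)
    (hc₁ : 0 < c₁) (hc₂ : 0 < c₂) (hη₁ : 0 ≤ η₁)
    (hR0 : 1 < β / (γ + μ))
    (hden : 0 < c₁ + c₂ + μ + η₁ - c₁ * (β / (γ + μ)) / 2)
    (ηs₀ : ℝ)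
    (hηs₀ : ηs₀ = sir2sD μ c₁ c₂ η₁ * (β / (γ + μ) - 1) /
      (c₁ + c₂ + μ + η₁ - c₁ * (β / (γ + μ)) / 2)) :
    0 ≤ ηs₀ ∧ sir2sRe β γ μ c₁ c₂ ηs₀ η₁ = 1 ∧
    (∀ ηs : ℝ, 0 ≤ ηs → sir2sRe β γ μ c₁ c₂ ηs η₁ = 1 → ηs = ηs₀) := by
  set R := β / (γ + μ) with hR
  set D := sir2sD μ c₁ c₂ η₁ with hD
  have hDpos : 0 < D := by
    rw [hD]; unfold sir2sD; nlinarith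
  have hE' : ∀ ηs, 0 ≤ ηs → 0 < sir2sE μ c₁ c₂ ηs η₁ := by
    intro ηs hηs; unfold sir2sE; rw [← hD]
    have : 0 < c₁ + c₂ + μ + η₁ := by linarith
    positivity
  clear_value R D
  have hkey : ηs₀ * (c₁ + c₂ + μ + η₁ - c₁ * R / 2) = D * (R - 1) := by
    rw [hηs₀]; exact div_mul_cancel₀ _ hden.ne'
  have hsum : 0 < c₁ + c₂ + μ + η₁ := by linarith
  have hηs₀nn : 0 ≤ ηs₀ := by
    rw [hηs₀]
    exact div_nonneg (mul_nonneg hDpos.le (by linarith)) hden.le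
  refine ⟨hηs₀nn, ?_, ?_⟩
  · have hE : 0 < sir2sE μ c₁ c₂ ηs₀ η₁ := by
      unfold sir2sE; rw [← hD]; positivity
    unfold sir2sRe
    rw [← hD, ← hR, div_eq_one_iff_eq hE.ne']
    unfold sir2sE; rw [← hD]
    linear_combination -hkey
  · intro ηs hηs hre
    have hE := hE' ηs hηs
    unfold sir2sRe at hre
    rw [← hD, ← hR, div_eq_one_iff_eq hE.ne'] at hre
    unfold sir2sE at hre; rw [← hD] at hre
    have : ηs * (c₁ + c₂ + μ + η₁ - c₁ * R / 2) = D * (R - 1) := by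
      linear_combination -hre
    have h2 : (ηs - ηs₀) * (c₁ + c₂ + μ + η₁ - c₁ * R / 2) = 0 := by
      linear_combination this - hkey
    rcases mul_eq_zero.mp h2 with h | h
    · linarith [sub_eq_zero.mp h]
    · exact absurd h hden.ne'
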